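/- arXiv:1812.10608 — 6 statements merged into one kernel-verified Lean document; each statement's English description precedes it below -/
import Mathlib

section
/- In the second nilpotent product A *₂ B, the image of A commutes with the image of the commutator subgroup [B,B]; that is, for all a ∈ A and b, b' ∈ B, [a,[b,b']] = 1. -/
open Monoid
open scoped commutatorElement

/-- The normal subgroup of the free product `A ∗ B` generated by commutators
`⁅x, ⁅a, b⁆⁆` with `x ∈ A ∗ B`, `a ∈ A`, `b ∈ B`. -/
def nil2Rel (A B : Type*) [Group A] [Group B] : Subgroup (Coprod A B) :=
  Subgroup.normalClosure
    {z | ∃ (x : Coprod A B) (a : A) (b : B), z = ⁅x, ⁅(Coprod.inl a : Coprod A B), Coprod.inr b⁆⁆}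

instance (A B : Type*) [Group A] [Group B] : (nil2Rel A B).Normal :=
  Subgroup.normalClosure_normal

/-- The second nilpotent product `A *₂ B = (A ∗ B)/[A ∗ B, [A,B]]`. -/
def Nil2 (A B : Type*) [Group A] [Group B] : Type _ :=
  Coprod A B ⧸ nil2Rel A B

instance (A B : Type*) [Group A] [Group B] : Group (Nil2 A B) :=
  QuotientGroup.Quotient.group _

/-- Canonical map `A → A *₂ B`. -/
def Nil2.inl {A B : Type*} [Group A] [Group B] : A →* Nil2 A B :=
  (QuotientGroup.mk' (nil2Rel A B)).comp Coprod.inl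

/-- Canonical map `B → A *₂ B`. -/
def Nil2.inr {A B : Type*} [Group A] [Group B] : B →* Nil2 A B :=
  (QuotientGroup.mk' (nil2Rel A B)).comp Coprod.inr

/-- The subgroup `[A,B]⁽²⁾` of `A *₂ B` generated by the commutators `⁅a, b⁆`. -/
def commSubgroup (A B : Type*) [Group A] [Group B] : Subgroup (Nil2 A B) :=
  Subgroup.closure {z | ∃ (a : A) (b : B), z = ⁅(Nil2.inl a : Nil2 A B), Nil2.inr b⁆}

/-- The commutators `⁅a, b⁆` are central in `A *₂ B`. -/
lemma nil2_commute {A B : Type*} [Group A] [Group B] (x : Nil2 A B) (a : A) (b : B) :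
    Commute x ⁅(Nil2.inl a : Nil2 A B), (Nil2.inr b : Nil2 A B)⁆ := by
  rw [← commutatorElement_eq_one_iff_commute]
  obtain ⟨y, rfl⟩ := QuotientGroup.mk'_surjective (nil2Rel A B) x
  have h : ⁅y, ⁅(Coprod.inl a : Coprod A B), Coprod.inr b⁆⁆ ∈ nil2Rel A B :=
    Subgroup.subset_normalClosure ⟨y, a, b, rfl⟩
  have h2 : QuotientGroup.mk' (nil2Rel A B) ⁅y, ⁅(Coprod.inl a : Coprod A B), Coprod.inr b⁆⁆
      = 1 := (QuotientGroup.eq_one_iff _).mpr h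
  rw [map_commutatorElement, map_commutatorElement] at h2
  exact h2

/-- `c ↦ ⁅a, c⁆` is multiplicative. -/
lemma nil2_hom {A B : Type*} [Group A] [Group B] (a : A) (c d : B) :
    ⁅(Nil2.inl a : Nil2 A B), (Nil2.inr (c * d) : Nil2 A B)⁆
      = ⁅(Nil2.inl a : Nil2 A B), (Nil2.inr c : Nil2 A B)⁆
        * ⁅(Nil2.inl a : Nil2 A B), (Nil2.inr d : Nil2 A B)⁆ := by
  set u : Nil2 A B := Nil2.inl a with hu
  set v : Nil2 A B := Nil2.inr c with hv
  set w : Nil2 A B := Nil2.inr d with hw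
  have h : v * ⁅u, w⁆ = ⁅u, w⁆ * v := (nil2_commute v a d).eq
  have e1 : ⁅u, v * w⁆ = ⁅u, v⁆ * (v * ⁅u, w⁆ * v⁻¹) := by
    simp only [commutatorElement_def]; group
  rw [map_mul, ← hv, ← hw, e1, h, mul_inv_cancel_right]

/-- `⁅a, c⁻¹⁆ = ⁅a, c⁆⁻¹`. -/
lemma nil2_inv {A B : Type*} [Group A] [Group B] (a : A) (c : B) :
    ⁅(Nil2.inl a : Nil2 A B), (Nil2.inr c⁻¹ : Nil2 A B)⁆
      = ⁅(Nil2.inl a : Nil2 A B), (Nil2.inr c : Nil2 A B)⁆⁻¹ := by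
  have h := nil2_hom a c c⁻¹
  rw [mul_inv_cancel] at h
  simp only [map_one, commutatorElement_one_right] at h
  exact eq_inv_of_mul_eq_one_right h.symm

/-- In `A *₂ B`, the image of `A` commutes with the image of `[B,B]`. -/
theorem stmt3 (A B : Type*) [Group A] [Group B] (a : A) (b b' : B) :
    ⁅(Nil2.inl a : Nil2 A B), ⁅(Nil2.inr b : Nil2 A B), (Nil2.inr b' : Nil2 A B)⁆⁆ = 1 := by
  have e : ⁅(Nil2.inr b : Nil2 A B), (Nil2.inr b' : Nil2 A B)⁆
      = (Nil2.inr ⁅b, b'⁆ : Nil2 A B) := (map_commutatorElement _ b b').symm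
  rw [e, commutatorElement_def b b', nil2_hom, nil2_hom, nil2_hom, nil2_inv, nil2_inv]
  have hc : Commute ⁅(Nil2.inl a : Nil2 A B), (Nil2.inr b : Nil2 A B)⁆
      ⁅(Nil2.inl a : Nil2 A B), (Nil2.inr b' : Nil2 A B)⁆ :=
    nil2_commute _ a b'
  set p : Nil2 A B := ⁅(Nil2.inl a : Nil2 A B), (Nil2.inr b : Nil2 A B)⁆
  set q : Nil2 A B := ⁅(Nil2.inl a : Nil2 A B), (Nil2.inr b' : Nil2 A B)⁆
  calc p * q * p⁻¹ * q⁻¹ = q * p * p⁻¹ * q⁻¹ := by rw [hc.eq]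
    _ = 1 := by group
end

section
/- The Whitney tensor product A ⊗̃ B of two (not necessarily abelian) groups, defined as the quotient of the free group on A × B by the relations (a₁a₂, b) = (a₁,b)(a₂,b) and (a, b₁b₂) = (a,b₁)(a,b₂), is an abelian group. -/
open Monoid
open scoped commutatorElement

/-- The relations defining the Whitney tensor product: bilinearity in each variable. -/
def whitneyRel (A B : Type*) [Group A] [Group B] : Subgroup (FreeGroup (A × B)) :=
  Subgroup.normalClosure
    ({z | ∃ (a₁ a₂ : A) (b : B),
        z = FreeGroup.of (a₁ * a₂, b) * (FreeGroup.of (a₂, b))⁻¹ * (FreeGroup.of (a₁, b))⁻¹} ∪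
     {z | ∃ (a : A) (b₁ b₂ : B),
        z = FreeGroup.of (a, b₁ * b₂) * (FreeGroup.of (a, b₂))⁻¹ * (FreeGroup.of (a, b₁))⁻¹})

instance (A B : Type*) [Group A] [Group B] : (whitneyRel A B).Normal :=
  Subgroup.normalClosure_normal

/-- The Whitney tensor product of two (not necessarily abelian) groups. -/
def WhitneyTensor (A B : Type*) [Group A] [Group B] : Type _ :=
  FreeGroup (A × B) ⧸ whitneyRel A B

instance (A B : Type*) [Group A] [Group B] : Group (WhitneyTensor A B) :=
  QuotientGroup.Quotient.group _

section Aux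

variable {A B : Type*} [Group A] [Group B]

/-- Image of a generator in the Whitney tensor product. -/
def wgen (p : A × B) : WhitneyTensor A B :=
  QuotientGroup.mk' (whitneyRel A B) (FreeGroup.of p)

lemma wgen_relA (a₁ a₂ : A) (b : B) :
    wgen (a₁ * a₂, b) = wgen (a₁, b) * wgen (a₂, b) := by
  have h : FreeGroup.of (a₁ * a₂, b) * (FreeGroup.of (a₂, b))⁻¹ * (FreeGroup.of (a₁, b))⁻¹
      ∈ whitneyRel A B :=
    Subgroup.subset_normalClosure (Or.inl ⟨a₁, a₂, b, rfl⟩)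
  have h1 : (QuotientGroup.mk' (whitneyRel A B))
      (FreeGroup.of (a₁ * a₂, b) * (FreeGroup.of (a₂, b))⁻¹ * (FreeGroup.of (a₁, b))⁻¹) = 1 :=
    (QuotientGroup.eq_one_iff _).mpr h
  simp only [map_mul, map_inv] at h1
  rw [mul_inv_eq_one] at h1
  exact mul_inv_eq_iff_eq_mul.mp h1

lemma wgen_relB (a : A) (b₁ b₂ : B) :
    wgen (a, b₁ * b₂) = wgen (a, b₁) * wgen (a, b₂) := by
  have h : FreeGroup.of (a, b₁ * b₂) * (FreeGroup.of (a, b₂))⁻¹ * (FreeGroup.of (a, b₁))⁻¹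
      ∈ whitneyRel A B :=
    Subgroup.subset_normalClosure (Or.inr ⟨a, b₁, b₂, rfl⟩)
  have h1 : (QuotientGroup.mk' (whitneyRel A B))
      (FreeGroup.of (a, b₁ * b₂) * (FreeGroup.of (a, b₂))⁻¹ * (FreeGroup.of (a, b₁))⁻¹) = 1 :=
    (QuotientGroup.eq_one_iff _).mpr h
  simp only [map_mul, map_inv] at h1
  rw [mul_inv_eq_one] at h1
  exact mul_inv_eq_iff_eq_mul.mp h1

lemma wgen_comm (p q : A × B) : wgen p * wgen q = wgen q * wgen p := by
  obtain ⟨a₂, b₁⟩ := p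
  obtain ⟨a₁, b₂⟩ := q
  have e1 : wgen ((a₁ * a₂ : A), (b₁ * b₂ : B))
      = wgen (a₁, b₁) * wgen (a₂, b₁) * (wgen (a₁, b₂) * wgen (a₂, b₂)) := by
    rw [wgen_relB, wgen_relA, wgen_relA]
  have e2 : wgen ((a₁ * a₂ : A), (b₁ * b₂ : B))
      = wgen (a₁, b₁) * wgen (a₁, b₂) * (wgen (a₂, b₁) * wgen (a₂, b₂)) := by
    rw [wgen_relA, wgen_relB, wgen_relB]
  have e3 : wgen (a₁, b₁) * wgen (a₂, b₁) * (wgen (a₁, b₂) * wgen (a₂, b₂))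
      = wgen (a₁, b₁) * wgen (a₁, b₂) * (wgen (a₂, b₁) * wgen (a₂, b₂)) := by
    rw [← e1, e2]
  have e4 := mul_left_cancel (a := wgen (a₁, b₁)) (by group; group at e3; exact e3 :
    wgen (a₁, b₁) * (wgen (a₂, b₁) * wgen (a₁, b₂) * wgen (a₂, b₂))
      = wgen (a₁, b₁) * (wgen (a₁, b₂) * wgen (a₂, b₁) * wgen (a₂, b₂)))
  exact mul_right_cancel e4

lemma wgen_comm_all (p : A × B) (y : WhitneyTensor A B) :
    wgen p * y = y * wgen p := by
  obtain ⟨w, rfl⟩ := QuotientGroup.mk'_surjective (whitneyRel A B) y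
  induction w using FreeGroup.induction_on with
  | C1 => exact (Commute.one_right (wgen p)).eq
  | of q => exact wgen_comm p q
  | inv_of q ih =>
      rw [map_inv]
      exact (Commute.inv_right (show Commute (wgen p) _ from ih)).eq
  | mul u v ihu ihv =>
      exact (Commute.mul_right (show Commute (wgen p) _ from ihu) (show Commute (wgen p) _ from ihv)).eq

end Aux

/-- The Whitney tensor product of two groups is abelian. -/
theorem stmt6 (A B : Type*) [Group A] [Group B] (x y : WhitneyTensor A B) :
    x * y = y * x := by
  obtain ⟨w, rfl⟩ := QuotientGroup.mk'_surjective (whitneyRel A B) x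
  induction w using FreeGroup.induction_on with
  | C1 => exact (Commute.one_left y).eq
  | of p => exact wgen_comm_all p y
  | inv_of p ih =>
      rw [map_inv]
      exact (Commute.inv_left (show Commute ((QuotientGroup.mk' (whitneyRel A B)) (FreeGroup.of p)) y from ih)).eq
  | mul u v ihu ihv =>
      exact (Commute.mul_left (show Commute _ y from ihu) (show Commute _ y from ihv)).eq
end

section
/- The central subgroup [A,B]^(2) of the second nilpotent product A *₂ B is isomorphic as a group to the tensor product A^{ab} ⊗ B^{ab} of the abelianizations, via the map sending the class of [a,b] to ā ⊗ b̄. -/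
open Monoid
open scoped commutatorElement

section Aux

variable (A B : Type*) [Group A] [Group B]

abbrev N2T := TensorProduct ℤ (Additive (Abelianization A)) (Additive (Abelianization B))

variable {A B}

def n2α (a : A) : Additive (Abelianization A) := Additive.ofMul (Abelianization.of a)
def n2β (b : B) : Additive (Abelianization B) := Additive.ofMul (Abelianization.of b)

@[simp] lemma n2α_one : n2α (1 : A) = 0 := by simp [n2α]
@[simp] lemma n2β_one : n2β (1 : B) = 0 := by simp [n2β]
@[simp] lemma n2α_mul (a a' : A) : n2α (a * a') = n2α a + n2α a' := by simp [n2α]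
@[simp] lemma n2β_mul (b b' : B) : n2β (b * b') = n2β b + n2β b' := by simp [n2β]
@[simp] lemma n2α_inv (a : A) : n2α (a⁻¹) = - n2α a := by simp [n2α]
@[simp] lemma n2β_inv (b : B) : n2β (b⁻¹) = - n2β b := by simp [n2β]

variable (A B)

@[ext] structure NkG where
  a : A
  b : B
  t : N2T A B

variable {A B}

noncomputable instance : Mul (NkG A B) :=
  ⟨fun x y => ⟨x.a * y.a, x.b * y.b, x.t + y.t - n2α y.a ⊗ₜ[ℤ] n2β x.b⟩⟩
noncomputable instance : One (NkG A B) := ⟨⟨1, 1, 0⟩⟩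
noncomputable instance : Inv (NkG A B) :=
  ⟨fun x => ⟨x.a⁻¹, x.b⁻¹, -x.t - n2α x.a ⊗ₜ[ℤ] n2β x.b⟩⟩

@[simp] lemma mul_a (x y : NkG A B) : (x * y).a = x.a * y.a := rfl
@[simp] lemma mul_b (x y : NkG A B) : (x * y).b = x.b * y.b := rfl
@[simp] lemma mul_t (x y : NkG A B) :
    (x * y).t = x.t + y.t - n2α y.a ⊗ₜ[ℤ] n2β x.b := rfl
@[simp] lemma one_a : (1 : NkG A B).a = 1 := rfl
@[simp] lemma one_b : (1 : NkG A B).b = 1 := rfl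
@[simp] lemma one_t : (1 : NkG A B).t = 0 := rfl
@[simp] lemma inv_a (x : NkG A B) : (x⁻¹).a = x.a⁻¹ := rfl
@[simp] lemma inv_b (x : NkG A B) : (x⁻¹).b = x.b⁻¹ := rfl
@[simp] lemma inv_t (x : NkG A B) :
    (x⁻¹).t = -x.t - n2α x.a ⊗ₜ[ℤ] n2β x.b := rfl

noncomputable instance : Group (NkG A B) where
  mul_assoc x y z := by
    ext
    · simp [mul_assoc]
    · simp [mul_assoc]
    · simp [TensorProduct.add_tmul, TensorProduct.tmul_add]; abel
  one_mul x := by ext <;> simp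
  mul_one x := by ext <;> simp
  inv_mul_cancel x := by
    ext
    · simp
    · simp
    · simp [TensorProduct.tmul_neg]; abel

end Aux

section Aux2

variable {A B : Type*} [Group A] [Group B]

noncomputable def NkG.inlH : A →* NkG A B where
  toFun a := ⟨a, 1, 0⟩
  map_one' := rfl
  map_mul' a a' := by ext <;> simp

noncomputable def NkG.inrH : B →* NkG A B where
  toFun b := ⟨1, b, 0⟩
  map_one' := rfl
  map_mul' b b' := by ext <;> simp

@[simp] lemma inlH_a (a : A) : (NkG.inlH a : NkG A B).a = a := rfl
@[simp] lemma inlH_b (a : A) : (NkG.inlH a : NkG A B).b = 1 := rfl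
@[simp] lemma inlH_t (a : A) : (NkG.inlH a : NkG A B).t = 0 := rfl
@[simp] lemma inrH_a (b : B) : (NkG.inrH b : NkG A B).a = 1 := rfl
@[simp] lemma inrH_b (b : B) : (NkG.inrH b : NkG A B).b = b := rfl
@[simp] lemma inrH_t (b : B) : (NkG.inrH b : NkG A B).t = 0 := rfl

lemma NkG.central (t : N2T A B) (g : NkG A B) :
    (⟨1, 1, t⟩ : NkG A B) * g = g * ⟨1, 1, t⟩ := by
  ext <;> (try simp) <;> abel

lemma NkG.comm_eq (a : A) (b : B) :
    ⁅(NkG.inlH a : NkG A B), NkG.inrH b⁆ = ⟨1, 1, n2α a ⊗ₜ[ℤ] n2β b⟩ := by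
  ext
  · simp [commutatorElement_def]
  · simp [commutatorElement_def]
  · simp [commutatorElement_def, TensorProduct.tmul_neg, TensorProduct.neg_tmul]

noncomputable def phi0 : Coprod A B →* NkG A B := Coprod.lift NkG.inlH NkG.inrH

lemma phi0_ker : nil2Rel A B ≤ MonoidHom.ker (phi0 (A := A) (B := B)) := by
  apply Subgroup.normalClosure_le_normal
  rintro z ⟨x, a, b, rfl⟩
  have : phi0 (A := A) (B := B) ⁅x, ⁅(Coprod.inl a : Coprod A B), Coprod.inr b⁆⁆ = 1 := by
    rw [map_commutatorElement, map_commutatorElement]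
    have h1 : phi0 (Coprod.inl a : Coprod A B) = NkG.inlH a := by
      simp [phi0]
    have h2 : phi0 (Coprod.inr b : Coprod A B) = NkG.inrH b := by
      simp [phi0]
    rw [h1, h2, NkG.comm_eq]
    exact commutatorElement_eq_one_iff_commute.mpr (NkG.central _ _).symm
  simpa [MonoidHom.mem_ker] using this

noncomputable def phi : Nil2 A B →* NkG A B :=
  QuotientGroup.lift (nil2Rel A B) phi0 phi0_ker

@[simp] lemma phi_inl (a : A) : phi (Nil2.inl a : Nil2 A B) = NkG.inlH a := by
  show QuotientGroup.lift _ _ _ (QuotientGroup.mk (Coprod.inl a : Coprod A B)) = _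
  rw [QuotientGroup.lift_mk]
  exact Coprod.lift_apply_inl _ _ _

@[simp] lemma phi_inr (b : B) : phi (Nil2.inr b : Nil2 A B) = NkG.inrH b := by
  show QuotientGroup.lift _ _ _ (QuotientGroup.mk (Coprod.inr b : Coprod A B)) = _
  rw [QuotientGroup.lift_mk]
  exact Coprod.lift_apply_inr _ _ _

lemma phi_comm (a : A) (b : B) :
    phi ⁅(Nil2.inl a : Nil2 A B), Nil2.inr b⁆ = ⟨1, 1, n2α a ⊗ₜ[ℤ] n2β b⟩ := by
  rw [map_commutatorElement, phi_inl, phi_inr, NkG.comm_eq]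

end Aux2

section Aux3

variable {A B : Type*} [Group A] [Group B]

lemma nil2_mk_surjective :
    Function.Surjective (QuotientGroup.mk : Coprod A B → Nil2 A B) :=
  QuotientGroup.mk_surjective

lemma comm_mem_center (a : A) (b : B) :
    ⁅(Nil2.inl a : Nil2 A B), Nil2.inr b⁆ ∈ Subgroup.center (Nil2 A B) := by
  rw [Subgroup.mem_center_iff]
  intro g
  obtain ⟨x, rfl⟩ := nil2_mk_surjective g
  have hz : (QuotientGroup.mk ⁅x, ⁅(Coprod.inl a : Coprod A B), Coprod.inr b⁆⁆ : Nil2 A B)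
      = 1 := by
    rw [QuotientGroup.eq_one_iff]
    exact Subgroup.subset_normalClosure ⟨x, a, b, rfl⟩
  refine (commutatorElement_eq_one_iff_commute.mp ?_).eq
  exact hz

lemma commSubgroup_le_center :
    commSubgroup A B ≤ Subgroup.center (Nil2 A B) := by
  rw [commSubgroup, Subgroup.closure_le]
  rintro z ⟨a, b, rfl⟩
  exact comm_mem_center a b

noncomputable instance : CommGroup (commSubgroup A B) :=
  { (inferInstance : Group (commSubgroup A B)) with
    mul_comm := fun x y => Subtype.ext <| by
      exact (Subgroup.mem_center_iff.mp (commSubgroup_le_center y.2) x.1) }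

/-- the basic commutator element of `commSubgroup`. -/
noncomputable def cAB (a : A) (b : B) : commSubgroup A B :=
  ⟨⁅(Nil2.inl a : Nil2 A B), Nil2.inr b⁆, Subgroup.subset_closure ⟨a, b, rfl⟩⟩

lemma comm_mul_left (g₁ g₂ h : Nil2 A B)
    (hc : ∀ w : Nil2 A B, w * ⁅g₂, h⁆ = ⁅g₂, h⁆ * w) :
    ⁅g₁ * g₂, h⁆ = ⁅g₁, h⁆ * ⁅g₂, h⁆ := by
  have key : ⁅g₁ * g₂, h⁆ = g₁ * ⁅g₂, h⁆ * g₁⁻¹ * ⁅g₁, h⁆ := by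
    simp only [commutatorElement_def]
    group
  rw [key, hc g₁]
  have h2 : ⁅g₂, h⁆ * g₁ * g₁⁻¹ * ⁅g₁, h⁆ = ⁅g₂, h⁆ * ⁅g₁, h⁆ := by group
  rw [h2, ← hc ⁅g₁, h⁆]

lemma comm_mul_right (g h₁ h₂ : Nil2 A B)
    (hc : ∀ w : Nil2 A B, w * ⁅g, h₂⁆ = ⁅g, h₂⁆ * w) :
    ⁅g, h₁ * h₂⁆ = ⁅g, h₁⁆ * ⁅g, h₂⁆ := by
  have key : ⁅g, h₁ * h₂⁆ = ⁅g, h₁⁆ * (h₁ * ⁅g, h₂⁆ * h₁⁻¹) := by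
    simp only [commutatorElement_def]
    group
  rw [key, hc h₁]
  group

end Aux3

section Aux4

variable {A B : Type*} [Group A] [Group B]

lemma cAB_central (a : A) (b : B) (w : Nil2 A B) :
    w * ⁅(Nil2.inl a : Nil2 A B), Nil2.inr b⁆ = ⁅(Nil2.inl a : Nil2 A B), Nil2.inr b⁆ * w :=
  Subgroup.mem_center_iff.mp (comm_mem_center a b) w

lemma cAB_mul_left (a a' : A) (b : B) : cAB (a * a') b = cAB a b * cAB a' b := by
  apply Subtype.ext
  show ⁅(Nil2.inl (a * a') : Nil2 A B), Nil2.inr b⁆ = _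
  rw [map_mul]
  exact comm_mul_left _ _ _ (cAB_central a' b)

lemma cAB_mul_right (a : A) (b b' : B) : cAB a (b * b') = cAB a b * cAB a b' := by
  apply Subtype.ext
  show ⁅(Nil2.inl a : Nil2 A B), Nil2.inr (b * b')⁆ = _
  rw [map_mul]
  exact comm_mul_right _ _ _ (cAB_central a b')

/-- For fixed `b`, `a ↦ cAB a b` as a monoid hom. -/
noncomputable def cABl (b : B) : A →* commSubgroup A B :=
  MonoidHom.mk' (fun a => cAB a b) (fun a a' => cAB_mul_left a a' b)

/-- Lift over the abelianization of `A`. -/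
noncomputable def cABlAb (b : B) : Abelianization A →* commSubgroup A B :=
  Abelianization.lift (cABl b)

lemma ab_of_surjective : Function.Surjective (Abelianization.of : A → Abelianization A) :=
  QuotientGroup.mk_surjective

/-- As a hom in `b`. -/
noncomputable def cABr : B →* (Abelianization A →* commSubgroup A B) :=
  MonoidHom.mk' cABlAb (by
    intro b b'
    apply MonoidHom.ext
    intro x
    obtain ⟨a, rfl⟩ := ab_of_surjective x
    rw [MonoidHom.mul_apply]
    show cABlAb (b * b') (Abelianization.of a) =
      cABlAb b (Abelianization.of a) * cABlAb b' (Abelianization.of a)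
    rw [cABlAb, cABlAb, cABlAb, Abelianization.lift_apply_of, Abelianization.lift_apply_of,
      Abelianization.lift_apply_of]
    exact cAB_mul_right a b b')

/-- Lift over the abelianization of `B`. -/
noncomputable def cABrAb : Abelianization B →* (Abelianization A →* commSubgroup A B) :=
  Abelianization.lift cABr

@[simp] lemma cABrAb_of (a : A) (b : B) :
    cABrAb (Abelianization.of b) (Abelianization.of a) = cAB a b := by
  rw [cABrAb, Abelianization.lift_apply_of]
  rfl

/-- The additive bilinear map. -/
noncomputable def HH : Additive (Abelianization A) →+
    (Additive (Abelianization B) →+ Additive (commSubgroup A B)) where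
  toFun x :=
    { toFun := fun y => Additive.ofMul (cABrAb y.toMul x.toMul)
      map_zero' := by simp
      map_add' := fun y y' => by simp }
  map_zero' := by
    apply AddMonoidHom.ext
    intro y
    simp
  map_add' x x' := by
    apply AddMonoidHom.ext
    intro y
    simp

noncomputable def psi : N2T A B →+ Additive (commSubgroup A B) :=
  TensorProduct.liftAddHom HH (by
    intro z x y
    calc HH (z • x) y = (AddMonoidHom.flip HH y) (z • x) := rfl
      _ = z • (AddMonoidHom.flip HH y) x := map_zsmul _ _ _
      _ = z • HH x y := rfl
      _ = HH x (z • y) := (map_zsmul (HH x) z y).symm)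

@[simp] lemma psi_tmul (a : A) (b : B) :
    psi (n2α a ⊗ₜ[ℤ] n2β b) = Additive.ofMul (cAB a b) := by
  rw [psi, TensorProduct.liftAddHom_tmul]
  show Additive.ofMul (cABrAb (Abelianization.of b) (Abelianization.of a)) = _
  rw [cABrAb_of]

end Aux4

section Aux5

variable {A B : Type*} [Group A] [Group B]

lemma phi_mem : ∀ g ∈ commSubgroup A B, (phi g).a = 1 ∧ (phi g).b = 1 := by
  intro g hg
  induction hg using Subgroup.closure_induction with
  | mem x hx =>
      obtain ⟨a, b, rfl⟩ := hx
      rw [phi_comm]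
      exact ⟨rfl, rfl⟩
  | one => rw [map_one]; exact ⟨rfl, rfl⟩
  | mul x y hx hy ihx ihy => rw [map_mul]; simp [ihx.1, ihx.2, ihy.1, ihy.2]
  | inv x hx ihx => rw [map_inv]; simp [ihx.1, ihx.2]

noncomputable def chi : commSubgroup A B →* Multiplicative (N2T A B) where
  toFun x := Multiplicative.ofAdd (phi x.val).t
  map_one' := by
    show Multiplicative.ofAdd (phi (1 : Nil2 A B)).t = 1
    rw [map_one]
    rfl
  map_mul' x y := by
    have hx := (phi_mem x.val x.2).2
    show Multiplicative.ofAdd (phi (x.val * y.val)).t = _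
    rw [map_mul, mul_t, hx, n2β_one, TensorProduct.tmul_zero, sub_zero]
    rfl

lemma psi_phi (g : Nil2 A B) (hg : g ∈ commSubgroup A B) :
    (Additive.toMul (psi (phi g).t) : commSubgroup A B).val = g := by
  induction hg using Subgroup.closure_induction with
  | mem x hx =>
      obtain ⟨a, b, rfl⟩ := hx
      rw [phi_comm]
      show (Additive.toMul (psi (n2α a ⊗ₜ[ℤ] n2β b)) : commSubgroup A B).val = _
      rw [psi_tmul]
      rfl
  | one =>
      rw [map_one]
      show (Additive.toMul (psi 0) : commSubgroup A B).val = (1 : Nil2 A B)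
      rw [map_zero]
      rfl
  | mul x y hx hy ihx ihy =>
      have h1 := (phi_mem x hx).2
      rw [map_mul, mul_t, h1, n2β_one, TensorProduct.tmul_zero, sub_zero, map_add]
      show ((Additive.toMul (psi (phi x).t) : commSubgroup A B) *
        (Additive.toMul (psi (phi y).t) : commSubgroup A B)).val = x * y
      show (Additive.toMul (psi (phi x).t) : commSubgroup A B).val *
        (Additive.toMul (psi (phi y).t) : commSubgroup A B).val = x * y
      rw [ihx, ihy]
  | inv x hx ihx =>
      have h1 := (phi_mem x hx).1
      rw [map_inv, inv_t, h1, n2α_one, TensorProduct.zero_tmul, sub_zero, map_neg]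
      show ((Additive.toMul (psi (phi x).t) : commSubgroup A B)⁻¹).val = x⁻¹
      show ((Additive.toMul (psi (phi x).t) : commSubgroup A B).val)⁻¹ = x⁻¹
      rw [ihx]

lemma chi_psi (s : N2T A B) :
    (phi (Additive.toMul (psi s) : commSubgroup A B).val).t = s := by
  induction s using TensorProduct.induction_on with
  | zero =>
      rw [map_zero]
      show (phi ((1 : commSubgroup A B) : Nil2 A B)).t = 0
      rw [show ((1 : commSubgroup A B) : Nil2 A B) = (1 : Nil2 A B) from rfl, map_one]
      rfl
  | tmul x y =>
      obtain ⟨a, ha⟩ := ab_of_surjective (Additive.toMul x)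
      obtain ⟨b, hb⟩ := ab_of_surjective (Additive.toMul y)
      have hx : n2α a = x := by rw [n2α, ha]; rfl
      have hy : n2β b = y := by rw [n2β, hb]; rfl
      rw [← hx, ← hy, psi_tmul]
      show (phi ⁅(Nil2.inl a : Nil2 A B), Nil2.inr b⁆).t = _
      rw [phi_comm]
  | add u v ihu ihv =>
      rw [map_add]
      show (phi ((Additive.toMul (psi u) : commSubgroup A B) *
        (Additive.toMul (psi v) : commSubgroup A B) : commSubgroup A B).val).t = u + v
      show (phi ((Additive.toMul (psi u) : commSubgroup A B).val *
        (Additive.toMul (psi v) : commSubgroup A B).val)).t = u + v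
      rw [map_mul, mul_t,
        (phi_mem _ (Additive.toMul (psi u) : commSubgroup A B).2).2, n2β_one,
        TensorProduct.tmul_zero, sub_zero, ihu, ihv]

end Aux5

/-- The central subgroup `[A,B]⁽²⁾` of `A *₂ B` is isomorphic to `Aᵃᵇ ⊗ Bᵃᵇ`, via
`⁅a,b⁆ ↦ ā ⊗ b̄`. -/
theorem stmt8 (A B : Type*) [Group A] [Group B] :
    ∃ e : commSubgroup A B ≃*
      Multiplicative (TensorProduct ℤ (Additive (Abelianization A))
        (Additive (Abelianization B))),
      ∀ (a : A) (b : B),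
        e ⟨⁅(Nil2.inl a : Nil2 A B), Nil2.inr b⁆, Subgroup.subset_closure ⟨a, b, rfl⟩⟩ =
          Multiplicative.ofAdd
            ((Additive.ofMul (Abelianization.of a)) ⊗ₜ[ℤ]
              (Additive.ofMul (Abelianization.of b))) := by
  refine ⟨{ toFun := chi,
            invFun := fun t => (Additive.toMul (psi t.toAdd) : commSubgroup A B),
            left_inv := ?_, right_inv := ?_, map_mul' := map_mul chi }, ?_⟩
  · intro x
    apply Subtype.ext
    exact psi_phi x.val x.2
  · intro t
    show chi (Additive.toMul (psi t.toAdd) : commSubgroup A B) = t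
    show Multiplicative.ofAdd (phi (Additive.toMul (psi t.toAdd) : commSubgroup A B).val).t = t
    rw [chi_psi]
    rfl
  · intro a b
    show Multiplicative.ofAdd (phi ⁅(Nil2.inl a : Nil2 A B), Nil2.inr b⁆).t = _
    rw [phi_comm]
    rfl
end

section
/- If A is a perfect group (A = [A,A]), then for any group B the second nilpotent product A *₂ B is isomorphic to the direct product A × B. -/
open Monoid
open scoped commutatorElement

section Aux

variable {A B : Type*} [Group A] [Group B]

theorem Nil2.central (a : A) (b : B) (x : Nil2 A B) :
    Commute x ⁅(Nil2.inl a : Nil2 A B), Nil2.inr b⁆ := by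
  obtain ⟨y, rfl⟩ := QuotientGroup.mk'_surjective (nil2Rel A B) x
  refine commutatorElement_eq_one_iff_commute.1 ?_
  show ⁅(QuotientGroup.mk' (nil2Rel A B)) y,
      ⁅(QuotientGroup.mk' (nil2Rel A B)) (Coprod.inl a),
        (QuotientGroup.mk' (nil2Rel A B)) (Coprod.inr b)⁆⁆ = 1
  rw [← map_commutatorElement, ← map_commutatorElement, ← MonoidHom.mem_ker,
    QuotientGroup.ker_mk']
  exact Subgroup.subset_normalClosure ⟨y, a, b, rfl⟩

/-- For fixed `b`, the map `a ↦ ⁅inl a, inr b⁆` is a homomorphism. -/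
def Nil2.commHom (b : B) : A →* Nil2 A B where
  toFun a := ⁅(Nil2.inl a : Nil2 A B), Nil2.inr b⁆
  map_one' := by simp
  map_mul' a₁ a₂ := by
    show ⁅(Nil2.inl (a₁ * a₂) : Nil2 A B), Nil2.inr b⁆ =
      ⁅(Nil2.inl a₁ : Nil2 A B), Nil2.inr b⁆ * ⁅(Nil2.inl a₂ : Nil2 A B), Nil2.inr b⁆
    rw [map_mul]
    have h₂ := (Nil2.central a₂ b (Nil2.inl a₁)).eq
    have key : ⁅(Nil2.inl a₁ * Nil2.inl a₂ : Nil2 A B), Nil2.inr b⁆ =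
        Nil2.inl a₁ * ⁅(Nil2.inl a₂ : Nil2 A B), Nil2.inr b⁆ * (Nil2.inl a₁)⁻¹ *
        ⁅(Nil2.inl a₁ : Nil2 A B), Nil2.inr b⁆ := by
      simp only [commutatorElement_def]; group
    rw [key, h₂, mul_inv_cancel_right]
    exact (Nil2.central a₂ b ⁅(Nil2.inl a₁ : Nil2 A B), Nil2.inr b⁆).eq.symm

theorem Nil2.comm_of_perfect (hA : commutator A = ⊤) (a : A) (b : B) :
    Commute (Nil2.inl a : Nil2 A B) (Nil2.inr b) := by
  rw [← commutatorElement_eq_one_iff_commute]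
  have ha : a ∈ commutator A := hA ▸ Subgroup.mem_top a
  rw [commutator_def, Subgroup.commutator_def] at ha
  change Nil2.commHom b a = 1
  induction ha using Subgroup.closure_induction with
  | mem z hz =>
    obtain ⟨p, -, q, -, rfl⟩ := hz
    rw [map_commutatorElement]
    exact commutatorElement_eq_one_iff_commute.2
      ((Nil2.central p b (Nil2.commHom b q)).symm)
  | one => simp
  | mul x y _ _ hx hy => rw [map_mul, hx, hy, one_mul]
  | inv x _ hx => rw [map_inv, hx, inv_one]

end Aux

/-- If `A` is perfect then `A *₂ B ≅ A × B`. -/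
theorem stmt9 (A B : Type*) [Group A] [Group B] (hA : commutator A = ⊤) :
    Nonempty (Nil2 A B ≃* A × B) := by
  have hker : nil2Rel A B ≤ (Coprod.lift (MonoidHom.inl A B) (MonoidHom.inr A B)).ker := by
    apply Subgroup.normalClosure_le_normal
    rintro z ⟨x, a, b, rfl⟩
    simp only [SetLike.mem_coe, MonoidHom.mem_ker, map_commutatorElement,
      Coprod.lift_apply_inl, Coprod.lift_apply_inr]
    have : ⁅(MonoidHom.inl A B a : A × B), MonoidHom.inr A B b⁆ = 1 := by
      simp [commutatorElement_def, Prod.ext_iff]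
    rw [this, commutatorElement_one_right]
  let φ : Nil2 A B →* A × B :=
    QuotientGroup.lift (nil2Rel A B) (Coprod.lift (MonoidHom.inl A B) (MonoidHom.inr A B)) hker
  let ψ : A × B →* Nil2 A B :=
    MonoidHom.noncommCoprod Nil2.inl Nil2.inr (Nil2.comm_of_perfect hA)
  refine ⟨MonoidHom.toMulEquiv φ ψ ?_ ?_⟩
  · have : (ψ.comp φ).comp (QuotientGroup.mk' (nil2Rel A B)) =
        QuotientGroup.mk' (nil2Rel A B) := by
      apply Coprod.hom_ext
      · ext a
        show ψ (φ ((QuotientGroup.mk' (nil2Rel A B)) (Coprod.inl a))) =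
          (QuotientGroup.mk' (nil2Rel A B)) (Coprod.inl a)
        erw [QuotientGroup.lift_mk', Coprod.lift_apply_inl]
        show (Nil2.inl a : Nil2 A B) * Nil2.inr (1 : B) = _
        rw [map_one, mul_one]
        rfl
      · ext b
        show ψ (φ ((QuotientGroup.mk' (nil2Rel A B)) (Coprod.inr b))) =
          (QuotientGroup.mk' (nil2Rel A B)) (Coprod.inr b)
        erw [QuotientGroup.lift_mk', Coprod.lift_apply_inr]
        show (Nil2.inl (1 : A) : Nil2 A B) * Nil2.inr b = _
        rw [map_one, one_mul]
        rfl
    ext x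
    obtain ⟨y, rfl⟩ := QuotientGroup.mk'_surjective (nil2Rel A B) x
    exact DFunLike.congr_fun this y
  · refine MonoidHom.ext fun x => ?_
    obtain ⟨a₁, b₁⟩ := x
    show φ (Nil2.inl a₁ * Nil2.inr b₁) = (a₁, b₁)
    have h1 : φ (Nil2.inl a₁) = (a₁, 1) := by
      show φ ((QuotientGroup.mk' (nil2Rel A B)) (Coprod.inl a₁)) = _
      erw [QuotientGroup.lift_mk', Coprod.lift_apply_inl]; rfl
    have h2 : φ (Nil2.inr b₁) = (1, b₁) := by
      show φ ((QuotientGroup.mk' (nil2Rel A B)) (Coprod.inr b₁)) = _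
      erw [QuotientGroup.lift_mk', Coprod.lift_apply_inr]; rfl
    rw [map_mul, h1, h2, Prod.mk_mul_mk, mul_one, one_mul]
end

section
/- The commutator subgroup of G = A *₂ B is isomorphic to the direct product [A,A] × [B,B] × [A,B]^(2). -/
open Monoid
open scoped commutatorElement

section Aux

variable {A B : Type*} [Group A] [Group B]

/-- General commutator identity in a group: if `⁅y, z⁆` is central then
`⁅x * y, z⁆ = ⁅x, z⁆ * ⁅y, z⁆`. -/
private lemma comm_mul_left_s11 {G : Type*} [Group G] (x y z : G)
    (hy : ∀ g : G, Commute g ⁅y, z⁆) :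
    ⁅x * y, z⁆ = ⁅x, z⁆ * ⁅y, z⁆ := by
  calc ⁅x * y, z⁆
      = x * ⁅y, z⁆ * (z * x⁻¹ * z⁻¹) := by
        simp only [commutatorElement_def]; group
    _ = ⁅y, z⁆ * (x * (z * x⁻¹ * z⁻¹)) := by rw [(hy x).eq, mul_assoc]
    _ = ⁅y, z⁆ * ⁅x, z⁆ := by
        simp only [commutatorElement_def]; group
    _ = ⁅x, z⁆ * ⁅y, z⁆ := ((hy ⁅x, z⁆).eq).symm

/-- Shuffling a product of "normal forms" when the relevant commutators are central. -/
private lemma prod_shuffle {G : Type*} [Group G] (X₁ Y₁ c₁ X₂ Y₂ c₂ : G)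
    (hc₁ : ∀ g : G, Commute c₁ g) (hq : ∀ g : G, Commute ⁅Y₁, X₂⁆ g) :
    X₁ * Y₁ * c₁ * (X₂ * Y₂ * c₂) = X₁ * X₂ * (Y₁ * Y₂) * (⁅Y₁, X₂⁆ * (c₁ * c₂)) := by
  have h1 : Y₁ * X₂ = ⁅Y₁, X₂⁆ * X₂ * Y₁ := by
    rw [commutatorElement_def]; group
  calc X₁ * Y₁ * c₁ * (X₂ * Y₂ * c₂)
      = X₁ * Y₁ * (c₁ * (X₂ * Y₂)) * c₂ := by group
    _ = X₁ * Y₁ * ((X₂ * Y₂) * c₁) * c₂ := by rw [(hc₁ (X₂ * Y₂)).eq]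
    _ = X₁ * (Y₁ * X₂) * (Y₂ * (c₁ * c₂)) := by group
    _ = X₁ * (⁅Y₁, X₂⁆ * X₂ * Y₁) * (Y₂ * (c₁ * c₂)) := by rw [h1]
    _ = X₁ * (⁅Y₁, X₂⁆ * (X₂ * (Y₁ * Y₂))) * (c₁ * c₂) := by group
    _ = X₁ * ((X₂ * (Y₁ * Y₂)) * ⁅Y₁, X₂⁆) * (c₁ * c₂) := by
        rw [(hq (X₂ * (Y₁ * Y₂))).eq]
    _ = X₁ * X₂ * (Y₁ * Y₂) * (⁅Y₁, X₂⁆ * (c₁ * c₂)) := by group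

/-- The quotient map `A ∗ B → A *₂ B`. -/
def nil2Mk : Coprod A B →* Nil2 A B := QuotientGroup.mk' (nil2Rel A B)

lemma nil2Mk_surjective : Function.Surjective (nil2Mk : Coprod A B →* Nil2 A B) :=
  fun x => QuotientGroup.mk'_surjective (nil2Rel A B) x

/-- The commutators `⁅a, b⁆` are central in `A *₂ B`. -/
lemma nil2_central (x : Nil2 A B) (a : A) (b : B) :
    Commute x ⁅(Nil2.inl a : Nil2 A B), Nil2.inr b⁆ := by
  obtain ⟨w, rfl⟩ := nil2Mk_surjective x
  rw [← commutatorElement_eq_one_iff_commute]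
  have h : ⁅(nil2Mk w : Nil2 A B), ⁅(Nil2.inl a : Nil2 A B), Nil2.inr b⁆⁆
      = (nil2Mk ⁅w, ⁅(Coprod.inl a : Coprod A B), Coprod.inr b⁆⁆ : Nil2 A B) := by
    rw [map_commutatorElement, map_commutatorElement]; rfl
  rw [h]
  exact (QuotientGroup.eq_one_iff _).mpr (Subgroup.subset_normalClosure ⟨w, a, b, rfl⟩)

lemma central_comm (x : Nil2 A B) {c : Nil2 A B} (hc : c ∈ commSubgroup A B) :
    Commute x c :=
  Subgroup.mem_center_iff.mp (commSubgroup_le_center hc) x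

lemma commElt_mem_commSubgroup (a : A) (b : B) :
    ⁅(Nil2.inl a : Nil2 A B), Nil2.inr b⁆ ∈ commSubgroup A B :=
  Subgroup.subset_closure ⟨a, b, rfl⟩

/-- `[A', B] = 1` in `A *₂ B`. -/
lemma inl_comm_of_mem_commutator {a : A} (ha : a ∈ commutator A) (b : B) :
    Commute (Nil2.inl a : Nil2 A B) (Nil2.inr b) := by
  let F : A →* Nil2 A B :=
    { toFun := fun x => ⁅(Nil2.inl x : Nil2 A B), Nil2.inr b⁆
      map_one' := by simp
      map_mul' := fun x y => by
        simp only [map_mul]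
        exact comm_mul_left_s11 (Nil2.inl x) (Nil2.inl y) (Nil2.inr b)
          (fun g => nil2_central g y b) }
  have hker : commutator A ≤ F.ker := by
    rw [commutator_def, Subgroup.commutator_le]
    intro g₁ _ g₂ _
    rw [MonoidHom.mem_ker, map_commutatorElement]
    exact commutatorElement_eq_one_iff_commute.mpr (nil2_central (F g₁) g₂ b)
  have h1 : F a = 1 := hker ha
  exact commutatorElement_eq_one_iff_commute.mp h1

/-- The projection `A *₂ B → A × B`. -/
def nil2Proj : Nil2 A B →* A × B := by
  refine QuotientGroup.lift (nil2Rel A B)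
    (Coprod.lift (MonoidHom.inl A B) (MonoidHom.inr A B)) ?_
  have hle : nil2Rel A B ≤ (Coprod.lift (MonoidHom.inl A B) (MonoidHom.inr A B)).ker := by
    apply Subgroup.normalClosure_le_normal
    rintro z ⟨x, a, b, rfl⟩
    rw [SetLike.mem_coe, MonoidHom.mem_ker, map_commutatorElement, map_commutatorElement,
      Coprod.lift_apply_inl, Coprod.lift_apply_inr]
    have hcomm : ⁅(MonoidHom.inl A B a : A × B), MonoidHom.inr A B b⁆ = 1 := by
      rw [commutatorElement_eq_one_iff_commute]
      exact Commute.prod (by simp [Commute, SemiconjBy]) (by simp [Commute, SemiconjBy])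
    rw [hcomm]
    simp
  exact fun x hx => MonoidHom.mem_ker.mp (hle hx)

lemma nil2Proj_inl (a : A) : (nil2Proj (Nil2.inl a) : A × B) = (a, 1) := rfl

lemma nil2Proj_inr (b : B) : (nil2Proj (Nil2.inr b) : A × B) = (1, b) := rfl

lemma nil2Proj_commSubgroup {c : Nil2 A B} (hc : c ∈ commSubgroup A B) :
    nil2Proj c = 1 := by
  have hle : commSubgroup A B ≤ (nil2Proj : Nil2 A B →* A × B).ker := by
    rw [commSubgroup, Subgroup.closure_le]
    rintro z ⟨a, b, rfl⟩
    rw [SetLike.mem_coe, MonoidHom.mem_ker, map_commutatorElement, nil2Proj_inl, nil2Proj_inr]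
    rw [commutatorElement_eq_one_iff_commute]
    exact Commute.prod (by simp [Commute, SemiconjBy]) (by simp [Commute, SemiconjBy])
  exact MonoidHom.mem_ker.mp (hle hc)

/-- Every element of `A *₂ B` has a normal form `inl a * inr b * c` with `c ∈ [A,B]⁽²⁾`. -/
lemma nil2_decomp (g : Nil2 A B) :
    ∃ (a : A) (b : B) (c : Nil2 A B), c ∈ commSubgroup A B ∧
      g = Nil2.inl a * Nil2.inr b * c := by
  obtain ⟨w, rfl⟩ := nil2Mk_surjective g
  induction w using Coprod.induction_on with
  | inl a => exact ⟨a, 1, 1, (commSubgroup A B).one_mem, by simp; rfl⟩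
  | inr b => exact ⟨1, b, 1, (commSubgroup A B).one_mem, by simp; rfl⟩
  | mul x y hx hy =>
    obtain ⟨a₁, b₁, c₁, hc₁, h₁⟩ := hx
    obtain ⟨a₂, b₂, c₂, hc₂, h₂⟩ := hy
    have hqmem : ⁅(Nil2.inr b₁ : Nil2 A B), Nil2.inl a₂⁆ ∈ commSubgroup A B := by
      have := (commSubgroup A B).inv_mem (commElt_mem_commSubgroup a₂ b₁)
      rwa [commutatorElement_inv] at this
    refine ⟨a₁ * a₂, b₁ * b₂, ⁅(Nil2.inr b₁ : Nil2 A B), Nil2.inl a₂⁆ * (c₁ * c₂),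
      (commSubgroup A B).mul_mem hqmem ((commSubgroup A B).mul_mem hc₁ hc₂), ?_⟩
    rw [map_mul, h₁, h₂,
      prod_shuffle (Nil2.inl a₁) (Nil2.inr b₁) c₁ (Nil2.inl a₂) (Nil2.inr b₂) c₂
        (fun g => (central_comm g hc₁).symm) (fun g => (central_comm g hqmem).symm),
      map_mul, map_mul]

/-- The comparison map `[A,A] × [B,B] × [A,B]⁽²⁾ → A *₂ B`. -/
def bigMap : (commutator A × commutator B × commSubgroup A B) →* Nil2 A B where
  toFun p := Nil2.inl (p.1 : A) * Nil2.inr (p.2.1 : B) * (p.2.2 : Nil2 A B)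
  map_one' := by simp
  map_mul' p q := by
    have hq_eq : ⁅(Nil2.inr (p.2.1 : B) : Nil2 A B), Nil2.inl (q.1 : A)⁆ = 1 :=
      commutatorElement_eq_one_iff_commute.mpr
        ((inl_comm_of_mem_commutator q.1.2 (p.2.1 : B)).symm)
    have hqall : ∀ g : Nil2 A B,
        Commute ⁅(Nil2.inr (p.2.1 : B) : Nil2 A B), Nil2.inl (q.1 : A)⁆ g := fun g => by
      rw [hq_eq]; exact Commute.one_left g
    have hc : ∀ g : Nil2 A B, Commute ((p.2.2 : Nil2 A B)) g :=
      fun g => (central_comm g p.2.2.2).symm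
    have key := prod_shuffle (Nil2.inl (p.1 : A)) (Nil2.inr (p.2.1 : B)) ((p.2.2 : Nil2 A B))
      (Nil2.inl (q.1 : A)) (Nil2.inr (q.2.1 : B)) ((q.2.2 : Nil2 A B)) hc hqall
    rw [hq_eq, one_mul] at key
    show Nil2.inl ((p.1 : A) * (q.1 : A)) * Nil2.inr ((p.2.1 : B) * (q.2.1 : B)) *
        ((p.2.2 : Nil2 A B) * (q.2.2 : Nil2 A B)) = _
    rw [map_mul, map_mul, key]

lemma bigMap_mem_commutator (p : commutator A × commutator B × commSubgroup A B) :
    (bigMap p : Nil2 A B) ∈ commutator (Nil2 A B) := by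
  have h1 : (commutator A).map (Nil2.inl : A →* Nil2 A B) ≤ commutator (Nil2 A B) := by
    rw [commutator_def, commutator_def, Subgroup.map_commutator]
    exact Subgroup.commutator_mono le_top le_top
  have h2 : (commutator B).map (Nil2.inr : B →* Nil2 A B) ≤ commutator (Nil2 A B) := by
    rw [commutator_def, commutator_def, Subgroup.map_commutator]
    exact Subgroup.commutator_mono le_top le_top
  have h3 : commSubgroup A B ≤ commutator (Nil2 A B) := by
    rw [commSubgroup, Subgroup.closure_le]
    rintro z ⟨a, b, rfl⟩
    rw [SetLike.mem_coe, commutator_def]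
    exact Subgroup.commutator_mem_commutator (Subgroup.mem_top _) (Subgroup.mem_top _)
  exact (commutator (Nil2 A B)).mul_mem
    ((commutator (Nil2 A B)).mul_mem
      (h1 ⟨(p.1 : A), p.1.2, rfl⟩) (h2 ⟨(p.2.1 : B), p.2.1.2, rfl⟩))
    (h3 p.2.2.2)

end Aux

/-- The commutator subgroup of `G = A *₂ B` is isomorphic to
`[A,A] × [B,B] × [A,B]⁽²⁾`. -/
theorem stmt11 (A B : Type*) [Group A] [Group B] :
    Nonempty ((commutator (Nil2 A B)) ≃*
      (commutator A × commutator B × commSubgroup A B)) := by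
  let Φ : (commutator A × commutator B × commSubgroup A B) →* commutator (Nil2 A B) :=
    bigMap.codRestrict _ bigMap_mem_commutator
  have hinj : Function.Injective Φ := by
    rw [injective_iff_map_eq_one]
    rintro ⟨⟨a, ha⟩, ⟨b, hb⟩, ⟨c, hc⟩⟩ hp
    have hp' : (Nil2.inl a : Nil2 A B) * Nil2.inr b * c = 1 := congrArg Subtype.val hp
    have hproj := congrArg (nil2Proj : Nil2 A B →* A × B) hp'
    rw [map_mul, map_mul, nil2Proj_inl, nil2Proj_inr, nil2Proj_commSubgroup hc, map_one,
      mul_one] at hproj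
    have hab : ((a, 1) : A × B) * (1, b) = (a, b) := by simp
    rw [hab] at hproj
    have ha1 : a = 1 := congrArg Prod.fst hproj
    have hb1 : b = 1 := congrArg Prod.snd hproj
    subst ha1; subst hb1
    have hc1 : c = 1 := by simpa using hp'
    subst hc1
    rfl
  have hsurj : Function.Surjective Φ := by
    rintro ⟨g, hg⟩
    obtain ⟨a, b, c, hcmem, hdecomp⟩ := nil2_decomp g
    have hproj : nil2Proj g = ((a, b) : A × B) := by
      rw [hdecomp, map_mul, map_mul, nil2Proj_inl, nil2Proj_inr,
        nil2Proj_commSubgroup hcmem, mul_one]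
      simp
    have hmapped : nil2Proj g ∈ (commutator A).prod (commutator B) := by
      have h1 : (commutator (Nil2 A B)).map (nil2Proj : Nil2 A B →* A × B) ≤
          (commutator A).prod (commutator B) := by
        rw [commutator_def, Subgroup.map_commutator]
        refine le_trans (Subgroup.commutator_mono le_top le_top) (le_of_eq ?_)
        rw [← Subgroup.top_prod_top, Subgroup.commutator_prod_prod]
        rfl
      exact h1 ⟨g, hg, rfl⟩
    rw [hproj, Subgroup.mem_prod] at hmapped
    refine ⟨(⟨a, hmapped.1⟩, ⟨b, hmapped.2⟩, ⟨c, hcmem⟩), ?_⟩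
    exact Subtype.ext hdecomp.symm
  exact ⟨(MulEquiv.ofBijective Φ ⟨hinj, hsurj⟩).symm⟩
end

section
/- If A and B are nilpotent groups of classes n and m respectively, then A *₂ B is nilpotent of class at most max{2, n, m}. Moreover, for k > 2, the k-th term of the lower central series of G = A *₂ B equals A_k × B_k (the direct product of the k-th lower central series terms of A and B). -/
open Monoid
open scoped commutatorElement

namespace Nil2Aux

open Pointwise

section CommIdent

variable {G : Type*} [Group G] (g h k x y : G)

theorem comm_mul_expand : ⁅g * h, k⁆ = g * ⁅h, k⁆ * g⁻¹ * ⁅g, k⁆ := by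
  simp only [commutatorElement_def]; group

theorem comm_mul_right_expand : ⁅g, x * y⁆ = ⁅g, x⁆ * (x * ⁅g, y⁆ * x⁻¹) := by
  simp only [commutatorElement_def]; group

theorem comm_inv_left : ⁅g⁻¹, k⁆ = g⁻¹ * ⁅g, k⁆⁻¹ * g := by
  simp only [commutatorElement_def]; group

theorem comm_inv_right : ⁅g, k⁻¹⁆ = k⁻¹ * ⁅g, k⁆⁻¹ * k := by
  simp only [commutatorElement_def]; group

variable {h k g}

theorem mul_left_of_commute (hc : Commute h k) : ⁅g * h, k⁆ = ⁅g, k⁆ := by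
  have h1 : h * k * h⁻¹ = k := by rw [hc.eq, mul_inv_cancel_right]
  calc ⁅g * h, k⁆ = g * (h * k * h⁻¹) * g⁻¹ * k⁻¹ := by
        simp only [commutatorElement_def]; group
    _ = g * k * g⁻¹ * k⁻¹ := by rw [h1]
    _ = ⁅g, k⁆ := by simp only [commutatorElement_def]

theorem mul_left_conj (hc : Commute g k) : ⁅g * h, k⁆ = g * ⁅h, k⁆ * g⁻¹ := by
  have h1 : g⁻¹ * k⁻¹ = k⁻¹ * g⁻¹ := (hc.inv_inv).eq
  calc ⁅g * h, k⁆ = g * (h * k * h⁻¹) * (g⁻¹ * k⁻¹) := by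
        simp only [commutatorElement_def]; group
    _ = g * (h * k * h⁻¹) * (k⁻¹ * g⁻¹) := by rw [h1]
    _ = g * ⁅h, k⁆ * g⁻¹ := by simp only [commutatorElement_def]; group

end CommIdent

/-- Compatibility wrapper: the lower central series of the whole group. -/
abbrev lowerCentralSeries (G : Type*) [Group G] (n : ℕ) : Subgroup G :=
  (⊤ : Subgroup G).lowerCentralSeries n

theorem lowerCentralSeries_one (G : Type*) [Group G] :
    lowerCentralSeries G 1 = commutator G := rfl

theorem lowerCentralSeries_antitone {G : Type*} [Group G] : Antitone (lowerCentralSeries G) :=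
  Subgroup.lowerCentralSeries_antitone _

instance lowerCentralSeries_normal {G : Type*} [Group G] (n : ℕ) :
    (lowerCentralSeries G n).Normal :=
  Subgroup.lowerCentralSeries_normal _ n

theorem lowerCentralSeries.map {G K : Type*} [Group G] [Group K] (f : G →* K) (n : ℕ) :
    (lowerCentralSeries G n).map f ≤ lowerCentralSeries K n :=
  Subgroup.lowerCentralSeries.map f n

variable {A B : Type*} [Group A] [Group B]

theorem central (x : Nil2 A B) (a : A) (b : B) :
    ⁅x, (⁅(Nil2.inl a : Nil2 A B), Nil2.inr b⁆ : Nil2 A B)⁆ = 1 := by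
  obtain ⟨z, rfl⟩ := QuotientGroup.mk'_surjective (nil2Rel A B) x
  show ⁅(QuotientGroup.mk' (nil2Rel A B)) z,
      ⁅(QuotientGroup.mk' (nil2Rel A B)) (Coprod.inl a),
        (QuotientGroup.mk' (nil2Rel A B)) (Coprod.inr b)⁆⁆ = 1
  rw [← map_commutatorElement, ← map_commutatorElement]
  show ((⁅z, ⁅Coprod.inl a, Coprod.inr b⁆⁆ : Coprod A B) : Coprod A B ⧸ nil2Rel A B) = 1
  rw [QuotientGroup.eq_one_iff]
  exact Subgroup.subset_normalClosure ⟨z, a, b, rfl⟩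

theorem commEl_central (a : A) (b : B) :
    (⁅(Nil2.inl a : Nil2 A B), Nil2.inr b⁆) ∈ Subgroup.center (Nil2 A B) :=
  Subgroup.mem_center_iff.mpr fun g =>
    (commutatorElement_eq_one_iff_commute.mp (central g a b))

/-- For fixed `b`, the map `a ↦ ⁅inl a, inr b⁆` is a homomorphism. -/
def phi (b : B) : A →* Nil2 A B where
  toFun a := ⁅(Nil2.inl a : Nil2 A B), Nil2.inr b⁆
  map_one' := by simp
  map_mul' a₁ a₂ := by
    have hc : ∀ x : Nil2 A B, x * ⁅(Nil2.inl a₂ : Nil2 A B), Nil2.inr b⁆ =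
        ⁅(Nil2.inl a₂ : Nil2 A B), Nil2.inr b⁆ * x :=
      fun x => Subgroup.mem_center_iff.mp (commEl_central a₂ b) x
    simp only [map_mul]
    rw [comm_mul_expand, hc (Nil2.inl a₁), mul_inv_cancel_right]
    exact (hc _).symm

/-- For fixed `a`, the map `b ↦ ⁅inl a, inr b⁆` is a homomorphism. -/
def psi (a : A) : B →* Nil2 A B where
  toFun b := ⁅(Nil2.inl a : Nil2 A B), Nil2.inr b⁆
  map_one' := by simp
  map_mul' b₁ b₂ := by
    have hc : ∀ x : Nil2 A B, x * ⁅(Nil2.inl a : Nil2 A B), Nil2.inr b₂⁆ =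
        ⁅(Nil2.inl a : Nil2 A B), Nil2.inr b₂⁆ * x :=
      fun x => Subgroup.mem_center_iff.mp (commEl_central a b₂) x
    simp only [map_mul]
    rw [comm_mul_right_expand, hc (Nil2.inr b₁), mul_inv_cancel_right]

theorem commute_of_left {a : A} (ha : a ∈ lowerCentralSeries A 1) (b : B) :
    Commute (Nil2.inl a : Nil2 A B) (Nil2.inr b) := by
  rw [← commutatorElement_eq_one_iff_commute]
  have hker : lowerCentralSeries A 1 ≤ (phi (A := A) b).ker := by
    rw [lowerCentralSeries_one, commutator_def, Subgroup.commutator_le]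
    intro g₁ _ g₂ _
    rw [MonoidHom.mem_ker, map_commutatorElement]
    exact commutatorElement_eq_one_iff_commute.mpr
      (Subgroup.mem_center_iff.mp (commEl_central g₂ b) _)
  exact hker ha

theorem commute_of_right (a : A) {b : B} (hb : b ∈ lowerCentralSeries B 1) :
    Commute (Nil2.inl a : Nil2 A B) (Nil2.inr b) := by
  rw [← commutatorElement_eq_one_iff_commute]
  have hker : lowerCentralSeries B 1 ≤ (psi (B := B) a).ker := by
    rw [lowerCentralSeries_one, commutator_def, Subgroup.commutator_le]
    intro g₁ _ g₂ _
    rw [MonoidHom.mem_ker, map_commutatorElement]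
    exact commutatorElement_eq_one_iff_commute.mpr
      (Subgroup.mem_center_iff.mp (commEl_central a g₂) _)
  exact hker hb

/-- Image of the `n`-th lower central series of `A` in `A *₂ B`. -/
def LL (A B : Type*) [Group A] [Group B] (n : ℕ) : Subgroup (Nil2 A B) :=
  Subgroup.map Nil2.inl (lowerCentralSeries A n)

/-- Image of the `n`-th lower central series of `B` in `A *₂ B`. -/
def RR (A B : Type*) [Group A] [Group B] (n : ℕ) : Subgroup (Nil2 A B) :=
  Subgroup.map Nil2.inr (lowerCentralSeries B n)

theorem top_eq :
    (⊤ : Subgroup (Nil2 A B)) =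
      Subgroup.closure (Set.range (Nil2.inl : A →* _) ∪ Set.range (Nil2.inr : B →* _)) := by
  have h1 : Subgroup.map (QuotientGroup.mk' (nil2Rel A B)) ⊤ = ⊤ :=
    Subgroup.map_top_of_surjective _ (QuotientGroup.mk'_surjective _)
  refine h1.symm.trans ?_
  rw [← Coprod.closure_range_inl_union_inr, MonoidHom.map_closure, Set.image_union,
    ← Set.range_comp, ← Set.range_comp]
  rfl

theorem LL_normal (n : ℕ) (hn : 1 ≤ n) : (LL A B n).Normal := by
  have key : ∀ (b : B) (h : Nil2 A B), h ∈ LL A B n → Nil2.inr b * h * (Nil2.inr b)⁻¹ = h := by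
    rintro b h ⟨a', ha', rfl⟩
    have hc : Commute (Nil2.inr b : Nil2 A B) (Nil2.inl a') :=
      (commute_of_left (lowerCentralSeries_antitone hn ha') b).symm
    rw [hc.eq, mul_inv_cancel_right]
  rw [← Subgroup.normalizer_eq_top_iff, eq_top_iff, top_eq, Subgroup.closure_le]
  rintro x (⟨a, rfl⟩ | ⟨b, rfl⟩)
  · rw [SetLike.mem_coe, Subgroup.mem_normalizer_iff]
    intro h
    constructor
    · rintro ⟨a', ha', rfl⟩
      exact ⟨a * a' * a⁻¹, (lowerCentralSeries_normal n).conj_mem a' ha' a, by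
        simp [map_mul]⟩
    · rintro ⟨a', ha', heq⟩
      have hh : Nil2.inl (a⁻¹ * a' * a) = h := by
        rw [map_mul, map_mul, map_inv, heq]; group
      refine ⟨a⁻¹ * a' * a, ?_, hh⟩
      have := (lowerCentralSeries_normal n).conj_mem a' ha' a⁻¹
      simpa using this
  · rw [SetLike.mem_coe, Subgroup.mem_normalizer_iff]
    intro h
    constructor
    · intro hh
      rw [key b h hh]; exact hh
    · intro hh
      have h2 : h = Nil2.inr b⁻¹ * (Nil2.inr b * h * (Nil2.inr b)⁻¹) * (Nil2.inr b⁻¹)⁻¹ := by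
        simp only [map_inv]; group
      rw [h2]
      rw [key b⁻¹ _ hh]
      exact hh

theorem RR_normal (n : ℕ) (hn : 1 ≤ n) : (RR A B n).Normal := by
  have key : ∀ (a : A) (h : Nil2 A B), h ∈ RR A B n → Nil2.inl a * h * (Nil2.inl a)⁻¹ = h := by
    rintro a h ⟨b', hb', rfl⟩
    have hc : Commute (Nil2.inl a : Nil2 A B) (Nil2.inr b') :=
      commute_of_right a (lowerCentralSeries_antitone hn hb')
    rw [hc.eq, mul_inv_cancel_right]
  rw [← Subgroup.normalizer_eq_top_iff, eq_top_iff, top_eq, Subgroup.closure_le]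
  rintro x (⟨a, rfl⟩ | ⟨b, rfl⟩)
  · rw [SetLike.mem_coe, Subgroup.mem_normalizer_iff]
    intro h
    constructor
    · intro hh
      rw [key a h hh]; exact hh
    · intro hh
      have h2 : h = Nil2.inl a⁻¹ * (Nil2.inl a * h * (Nil2.inl a)⁻¹) * (Nil2.inl a⁻¹)⁻¹ := by
        simp only [map_inv]; group
      rw [h2, key a⁻¹ _ hh]
      exact hh
  · rw [SetLike.mem_coe, Subgroup.mem_normalizer_iff]
    intro h
    constructor
    · rintro ⟨b', hb', rfl⟩
      exact ⟨b * b' * b⁻¹, (lowerCentralSeries_normal n).conj_mem b' hb' b, by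
        simp [map_mul]⟩
    · rintro ⟨b', hb', heq⟩
      have hh : Nil2.inr (b⁻¹ * b' * b) = h := by
        rw [map_mul, map_mul, map_inv, heq]; group
      refine ⟨b⁻¹ * b' * b, ?_, hh⟩
      have := (lowerCentralSeries_normal n).conj_mem b' hb' b⁻¹
      simpa using this

theorem commSubgroup_le_center : commSubgroup A B ≤ Subgroup.center (Nil2 A B) := by
  rw [commSubgroup, Subgroup.closure_le]
  rintro z ⟨a, b, rfl⟩
  exact commEl_central a b

theorem commSubgroup_normal : (commSubgroup A B).Normal := by
  constructor
  intro h hh g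
  have : g * h * g⁻¹ = h := by
    rw [Subgroup.mem_center_iff.mp (commSubgroup_le_center hh) g, mul_inv_cancel_right]
  rw [this]; exact hh

/-- Key computation: commutators of `inl a' * inr b'` with anything land in the next level. -/
theorem key_mem (n : ℕ) (hn : 1 ≤ n) {a' : A} {b' : B}
    (ha' : a' ∈ lowerCentralSeries A n) (hb' : b' ∈ lowerCentralSeries B n) (x : Nil2 A B) :
    ⁅Nil2.inl a' * Nil2.inr b', x⁆ ∈ LL A B (n + 1) ⊔ RR A B (n + 1) := by
  haveI hL : (LL A B (n + 1)).Normal := LL_normal (n + 1) (by omega)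
  haveI hR : (RR A B (n + 1)).Normal := RR_normal (n + 1) (by omega)
  haveI hT : (LL A B (n + 1) ⊔ RR A B (n + 1)).Normal := Subgroup.sup_normal _ _
  have hx : x ∈ Subgroup.closure (Set.range (Nil2.inl : A →* _) ∪
      Set.range (Nil2.inr : B →* _)) := by
    rw [← top_eq]; trivial
  induction hx using Subgroup.closure_induction with
  | mem y hy =>
    obtain ⟨a, rfl⟩ | ⟨b, rfl⟩ := hy
    · have hc : Commute (Nil2.inr b' : Nil2 A B) (Nil2.inl a) :=
        (commute_of_right a (lowerCentralSeries_antitone hn hb')).symm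
      rw [mul_left_of_commute hc, ← map_commutatorElement]
      exact le_sup_left (α := Subgroup (Nil2 A B))
        ⟨⁅a', a⁆, Subgroup.commutator_mem_commutator ha' (Subgroup.mem_top a), rfl⟩
    · have hc : Commute (Nil2.inl a' : Nil2 A B) (Nil2.inr b) :=
        commute_of_left (lowerCentralSeries_antitone hn ha') b
      rw [mul_left_conj hc, ← map_commutatorElement]
      refine hT.conj_mem _ ?_ (Nil2.inl a')
      exact le_sup_right (α := Subgroup (Nil2 A B))
        ⟨⁅b', b⁆, Subgroup.commutator_mem_commutator hb' (Subgroup.mem_top b), rfl⟩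
  | one =>
    rw [commutatorElement_one_right]
    exact one_mem _
  | mul y z hy hz py pz =>
    rw [comm_mul_right_expand]
    exact mul_mem py (hT.conj_mem _ pz y)
  | inv y hy py =>
    rw [comm_inv_right]
    have := hT.conj_mem _ (inv_mem py) y⁻¹
    simpa using this

theorem lcs_one_le :
    lowerCentralSeries (Nil2 A B) 1 ≤ (LL A B 1 ⊔ RR A B 1) ⊔ commSubgroup A B := by
  haveI hL : (LL A B 1).Normal := LL_normal 1 le_rfl
  haveI hR : (RR A B 1).Normal := RR_normal 1 le_rfl
  haveI hC : (commSubgroup A B).Normal := commSubgroup_normal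
  haveI hD : ((LL A B 1 ⊔ RR A B 1) ⊔ commSubgroup A B).Normal := Subgroup.sup_normal _ _
  have inner : ∀ s ∈ (Set.range (Nil2.inl : A →* _) ∪ Set.range (Nil2.inr : B →* _)),
      ∀ x : Nil2 A B, ⁅x, s⁆ ∈ (LL A B 1 ⊔ RR A B 1) ⊔ commSubgroup A B := by
    intro s hs x
    have hx : x ∈ Subgroup.closure (Set.range (Nil2.inl : A →* _) ∪
        Set.range (Nil2.inr : B →* _)) := by rw [← top_eq]; trivial
    induction hx using Subgroup.closure_induction with
    | mem y hy =>
      obtain ⟨a₂, rfl⟩ | ⟨b₂, rfl⟩ := hy <;> obtain ⟨a, rfl⟩ | ⟨b, rfl⟩ := hs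
      · rw [← map_commutatorElement]
        exact le_sup_left (α := Subgroup (Nil2 A B)) (le_sup_left (α := Subgroup (Nil2 A B))
          ⟨⁅a₂, a⁆, Subgroup.commutator_mem_commutator (Subgroup.mem_top _)
            (Subgroup.mem_top _), rfl⟩)
      · exact le_sup_right (α := Subgroup (Nil2 A B))
          (Subgroup.subset_closure ⟨a₂, b, rfl⟩)
      · rw [← commutatorElement_inv]
        exact inv_mem (le_sup_right (α := Subgroup (Nil2 A B))
          (Subgroup.subset_closure ⟨a, b₂, rfl⟩))
      · rw [← map_commutatorElement]
        exact le_sup_left (α := Subgroup (Nil2 A B)) (le_sup_right (α := Subgroup (Nil2 A B))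
          ⟨⁅b₂, b⁆, Subgroup.commutator_mem_commutator (Subgroup.mem_top _)
            (Subgroup.mem_top _), rfl⟩)
    | one => rw [commutatorElement_one_left]; exact one_mem _
    | mul y z hy hz py pz =>
      rw [comm_mul_expand]
      exact mul_mem (hD.conj_mem _ pz y) py
    | inv y hy py =>
      rw [comm_inv_left]
      have := hD.conj_mem _ (inv_mem py) y⁻¹
      simpa using this
  rw [lowerCentralSeries_one, commutator_def, Subgroup.commutator_le]
  intro g₁ hg₁ g₂ hg₂
  clear hg₁ hg₂
  have hg2 : g₂ ∈ Subgroup.closure (Set.range (Nil2.inl : A →* _) ∪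
      Set.range (Nil2.inr : B →* _)) := by rw [← top_eq]; trivial
  induction hg2 using Subgroup.closure_induction with
  | mem y hy => exact inner y hy g₁
  | one => rw [commutatorElement_one_right]; exact one_mem _
  | mul y z hy hz py pz =>
    rw [comm_mul_right_expand]
    exact mul_mem py (hD.conj_mem _ pz y)
  | inv y hy py =>
    rw [comm_inv_right]
    have := hD.conj_mem _ (inv_mem py) y⁻¹
    simpa using this

theorem lcs_le (n : ℕ) (hn : 2 ≤ n) :
    lowerCentralSeries (Nil2 A B) n ≤ LL A B n ⊔ RR A B n := by
  induction n, hn using Nat.le_induction with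
  | base =>
    have h2 : lowerCentralSeries (Nil2 A B) 2 = ⁅lowerCentralSeries (Nil2 A B) 1, ⊤⁆ := rfl
    rw [h2, Subgroup.commutator_le]
    intro g hg x _
    haveI hC : (commSubgroup A B).Normal := commSubgroup_normal
    haveI hR1 : (RR A B 1).Normal := RR_normal 1 le_rfl
    have hg' : g ∈ ((LL A B 1 ⊔ RR A B 1 : Subgroup (Nil2 A B)) : Set (Nil2 A B)) *
        (commSubgroup A B : Set (Nil2 A B)) := by
      rw [← Subgroup.mul_normal]
      exact lcs_one_le hg
    obtain ⟨u, hu, c, hc, rfl⟩ := hg'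
    have hcx : Commute c x :=
      (Subgroup.mem_center_iff.mp (commSubgroup_le_center hc) x).symm
    rw [mul_left_of_commute hcx]
    have hu' : u ∈ (LL A B 1 : Set (Nil2 A B)) * (RR A B 1 : Set (Nil2 A B)) := by
      rw [← Subgroup.mul_normal]; exact hu
    obtain ⟨v, ⟨a', ha', rfl⟩, w, ⟨b', hb', rfl⟩, rfl⟩ := hu'
    exact key_mem 1 le_rfl ha' hb' x
  | succ n hn ih =>
    have h2 : lowerCentralSeries (Nil2 A B) (n + 1) =
        ⁅lowerCentralSeries (Nil2 A B) n, ⊤⁆ := rfl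
    rw [h2, Subgroup.commutator_le]
    intro g hg x _
    haveI hL : (LL A B n).Normal := LL_normal n (by omega)
    haveI hR : (RR A B n).Normal := RR_normal n (by omega)
    have hg' : g ∈ (LL A B n : Set (Nil2 A B)) * (RR A B n : Set (Nil2 A B)) := by
      rw [← Subgroup.mul_normal]; exact ih hg
    obtain ⟨v, ⟨a', ha', rfl⟩, w, ⟨b', hb', rfl⟩, rfl⟩ := hg'
    exact key_mem n (by omega) ha' hb' x

theorem lcs_eq (n : ℕ) (hn : 2 ≤ n) :
    lowerCentralSeries (Nil2 A B) n = LL A B n ⊔ RR A B n :=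
  le_antisymm (lcs_le n hn)
    (sup_le (lowerCentralSeries.map Nil2.inl n) (lowerCentralSeries.map Nil2.inr n))

/-- The canonical projection `A *₂ B →* A × B`. -/
def pibar : Nil2 A B →* A × B :=
  QuotientGroup.lift (nil2Rel A B) (Coprod.lift (MonoidHom.inl A B) (MonoidHom.inr A B)) (by
    apply Subgroup.normalClosure_le_normal
    rintro z ⟨x, a, b, rfl⟩
    rw [SetLike.mem_coe, MonoidHom.mem_ker, map_commutatorElement, map_commutatorElement]
    have h1 : ⁅((Coprod.lift (MonoidHom.inl A B) (MonoidHom.inr A B)) (Coprod.inl a)),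
        ((Coprod.lift (MonoidHom.inl A B) (MonoidHom.inr A B)) (Coprod.inr b))⁆ = 1 := by
      rw [Coprod.lift_apply_inl, Coprod.lift_apply_inr]
      exact commutatorElement_eq_one_iff_commute.mpr (MonoidHom.commute_inl_inr a b)
    rw [h1]
    simp)

theorem pibar_inl (a : A) : pibar (A := A) (B := B) (Nil2.inl a) = (a, 1) := rfl

theorem pibar_inr (b : B) : pibar (A := A) (B := B) (Nil2.inr b) = (1, b) := rfl

theorem main_iso (n : ℕ) (hn : 2 ≤ n) :
    Nonempty ((lowerCentralSeries (Nil2 A B) n) ≃*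
      (lowerCentralSeries A n × lowerCentralSeries B n)) := by
  haveI hL : (LL A B n).Normal := LL_normal n (by omega)
  haveI hR : (RR A B n).Normal := RR_normal n (by omega)
  set f1 : (lowerCentralSeries A n) →* Nil2 A B :=
    Nil2.inl.comp (Subgroup.subtype _) with hf1
  set f2 : (lowerCentralSeries B n) →* Nil2 A B :=
    Nil2.inr.comp (Subgroup.subtype _) with hf2
  have hcomm : ∀ x y, Commute (f1 x) (f2 y) := fun x y =>
    commute_of_left (lowerCentralSeries_antitone (by omega : 1 ≤ n) x.2) _
  have hmem : ∀ p : (lowerCentralSeries A n) × (lowerCentralSeries B n),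
      (MonoidHom.noncommCoprod f1 f2 hcomm) p ∈ lowerCentralSeries (Nil2 A B) n := by
    intro p
    have h0 : (MonoidHom.noncommCoprod f1 f2 hcomm) p = f1 p.1 * f2 p.2 := rfl
    rw [h0]
    exact mul_mem (lowerCentralSeries.map Nil2.inl n ⟨p.1.1, p.1.2, rfl⟩)
      (lowerCentralSeries.map Nil2.inr n ⟨p.2.1, p.2.2, rfl⟩)
  set ψ := (MonoidHom.noncommCoprod f1 f2 hcomm).codRestrict
    (lowerCentralSeries (Nil2 A B) n) hmem with hψ
  have hinj : Function.Injective ψ := by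
    rw [injective_iff_map_eq_one]
    intro p hp
    have h0 : Nil2.inl (p.1 : A) * Nil2.inr (p.2 : B) = 1 := congrArg Subtype.val hp
    have h1 : pibar (Nil2.inl ((p.1 : A)) : Nil2 A B) * pibar (Nil2.inr ((p.2 : B))) = 1 := by
      rw [← map_mul, h0, map_one]
    rw [pibar_inl, pibar_inr] at h1
    have h2 : (((p.1 : A)), ((p.2 : B))) = ((1 : A), (1 : B)) := by
      simpa [Prod.ext_iff] using h1
    rw [Prod.ext_iff] at h2
    have : p = 1 := by
      ext
      · exact h2.1
      · exact h2.2
    exact this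
  have hsurj : Function.Surjective ψ := by
    rintro ⟨g, hg⟩
    rw [lcs_eq n hn] at hg
    have hg' : g ∈ (LL A B n : Set (Nil2 A B)) * (RR A B n : Set (Nil2 A B)) := by
      rw [← Subgroup.mul_normal]; exact hg
    obtain ⟨v, ⟨a', ha', rfl⟩, w, ⟨b', hb', rfl⟩, rfl⟩ := hg'
    exact ⟨(⟨a', ha'⟩, ⟨b', hb'⟩), Subtype.ext rfl⟩
  exact ⟨(MulEquiv.ofBijective ψ ⟨hinj, hsurj⟩).symm⟩

theorem lcs_bot (n : ℕ) (hn : 2 ≤ n) (hA : lowerCentralSeries A n = ⊥)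
    (hB : lowerCentralSeries B n = ⊥) : lowerCentralSeries (Nil2 A B) n = ⊥ := by
  rw [lcs_eq n hn, LL, RR, hA, hB]
  simp

end Nil2Aux

/-- If `A`, `B` are nilpotent of classes `n`, `m`, then `A *₂ B` is nilpotent of class at
most `max {2, n, m}`; moreover for `k > 2` the `k`-th term of the lower central series of
`A *₂ B` (with the convention `G₁ = G`, so it is `lowerCentralSeries _ (k-1)` in Mathlib's
0-based indexing) is isomorphic to `A_k × B_k`. -/
theorem stmt16 (A B : Type*) [Group A] [Group B]
    [hA : Group.IsNilpotent A] [hB : Group.IsNilpotent B] :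
    (∃ h : Group.IsNilpotent (Nil2 A B),
        Group.nilpotencyClass (Nil2 A B) ≤
          max 2 (max (Group.nilpotencyClass A) (Group.nilpotencyClass B))) ∧
    (∀ k : ℕ, 2 < k →
        Nonempty (((⊤ : Subgroup (Nil2 A B)).lowerCentralSeries (k - 1)) ≃*
          ((⊤ : Subgroup A).lowerCentralSeries (k - 1) × (⊤ : Subgroup B).lowerCentralSeries (k - 1)))) := by
  constructor
  · set N := max 2 (max (Group.nilpotencyClass A) (Group.nilpotencyClass B)) with hN
    have hbot : (⊤ : Subgroup (Nil2 A B)).lowerCentralSeries N = ⊥ :=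
      Nil2Aux.lcs_bot N (le_max_left _ _)
        (lowerCentralSeries_eq_bot_iff_nilpotencyClass_le.mpr
          (le_max_of_le_right (le_max_left _ _)))
        (lowerCentralSeries_eq_bot_iff_nilpotencyClass_le.mpr
          (le_max_of_le_right (le_max_right _ _)))
    have hnil : Group.IsNilpotent (Nil2 A B) := nilpotent_iff_lowerCentralSeries.mpr ⟨N, hbot⟩
    exact ⟨hnil, (@lowerCentralSeries_eq_bot_iff_nilpotencyClass_le _ _ hnil N).mp hbot⟩
  · intro k hk
    exact Nil2Aux.main_iso (k - 1) (by omega)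
end
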